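/- Let L be a separably closed field containing the rational function field F_q(t) with t transcendental over F_q, write C := D_t, and let π ∈ F_q[X] be monic irreducible of degree d. Then the π-torsion set C[π] := {δ ∈ L : C(π)(δ) = 0} has exactly q^d elements; the rule (a mod π)·δ := C(a)(δ) is well defined and makes C[π] a one-dimensional vector space over the field F_q[X]/(π); and for every field automorphism σ of L fixing F_q(t) pointwise there is a unique invertible residue class ā ∈ (F_q[X]/(π))^× such that σ(δ) = C(a)(δ) for all δ ∈ C[π] and every representative a ∈ F_q[X] of ā. -/

import Mathlib

open Polynomial

noncomputable def QcAux (q : ℕ) {L : Type} [Field L] (t : L) : ℕ → Polynomial L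
  | 0 => Polynomial.X
  | i + 1 => QcAux q t i ^ q + Polynomial.C t * QcAux q t i

lemma QcAux_monic_natDegree {q : ℕ} (hq : 2 ≤ q) {L : Type} [Field L] (t : L) :
    ∀ i, (QcAux q t i).Monic ∧ (QcAux q t i).natDegree = q ^ i := by
  intro i
  induction i with
  | zero => exact ⟨monic_X, natDegree_X⟩
  | succ i ih =>
    obtain ⟨hmon, hdeg⟩ := ih
    have hpow : ((QcAux q t i) ^ q).Monic := hmon.pow q
    have hdegpow : ((QcAux q t i) ^ q).natDegree = q ^ (i + 1) := by
      rw [natDegree_pow, hdeg, pow_succ, mul_comm]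
    have hltn : (Polynomial.C t * QcAux q t i).natDegree < ((QcAux q t i) ^ q).natDegree := by
      refine lt_of_le_of_lt (natDegree_C_mul_le t _) ?_
      rw [hdeg, hdegpow]
      exact Nat.pow_lt_pow_right (by omega) (Nat.lt_succ_self i)
    have hlt := degree_lt_degree hltn
    refine ⟨hpow.add_of_left hlt, ?_⟩
    show ((QcAux q t i) ^ q + Polynomial.C t * QcAux q t i).natDegree = q ^ (i + 1)
    rw [add_comm, natDegree_add_eq_right_of_natDegree_lt hltn, hdegpow]

lemma QcAux_derivative {q : ℕ} {L : Type} [Field L] (hq0 : (q : L) = 0) (t : L) :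
    ∀ i, (QcAux q t i).derivative = Polynomial.C (t ^ i) := by
  intro i
  induction i with
  | zero => simp [QcAux]
  | succ i ih =>
    show derivative ((QcAux q t i) ^ q + Polynomial.C t * QcAux q t i) = _
    rw [derivative_add, derivative_pow, derivative_C_mul, ih, pow_succ]
    rw [hq0]
    simp [pow_succ, mul_comm]

/-- Let `L` be a separably closed field containing `F_q(t)` (with `t`
transcendental over `F_q`), `C := D_t`, and `π ∈ F_q[X]` monic irreducible of degree `d`.
Then the `π`-torsion `C[π] = {δ ∈ L : C(π)(δ) = 0}` has exactly `q^d` elements; the rule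
`(a mod π)·δ := C(a)(δ)` is well defined and makes `C[π]` a one-dimensional vector space
over `F_q[X]/(π)`; and every automorphism `σ` of `L` fixing `F_q(t)` acts on `C[π]`
through a unique unit `ā ∈ (F_q[X]/(π))^×`. -/
theorem carlitz_torsion_one_dimensional_and_character
    (p m : ℕ) (hp : p.Prime) (hm : 0 < m)
    (Fq : Type) [Field Fq] [Fintype Fq] (hq : Fintype.card Fq = p ^ m)
    (L : Type) [Field L] [Algebra Fq L] [IsSepClosed L]
    (t : L) (ht : Transcendental Fq t)
    (C : Polynomial Fq →ₐ[Fq] Module.End Fq L)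
    (hC : ∀ x : L, C Polynomial.X x = t * x + x ^ Fintype.card Fq)
    (π : Polynomial Fq) (hπmonic : π.Monic) (hπirr : Irreducible π) :
    -- (a) cardinality q^d
    Nat.card {δ : L // C π δ = 0} = Fintype.card Fq ^ π.natDegree ∧
    -- (b) the F_q[X]/(π)-action is well defined ...
    (∀ a b : Polynomial Fq,
      Ideal.Quotient.mk (Ideal.span {π}) a = Ideal.Quotient.mk (Ideal.span {π}) b →
      ∀ δ : L, C π δ = 0 → C a δ = C b δ) ∧
    (∀ (a : Polynomial Fq) (δ : L), C π δ = 0 → C π (C a δ) = 0) ∧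
    -- ... and C[π] is one-dimensional over F_q[X]/(π): a single nonzero torsion point
    -- generates everything
    (∃ δ₀ : L, C π δ₀ = 0 ∧ δ₀ ≠ 0 ∧
      ∀ δ : L, C π δ = 0 → ∃ a : Polynomial Fq, C a δ₀ = δ) ∧
    -- (c) the mod π Carlitz character: unique unit class through which σ acts
    (∀ σ : L ≃ₐ[Fq] L, σ t = t →
      ∃! abar : (Polynomial Fq ⧸ Ideal.span {π})ˣ,
        ∀ a : Polynomial Fq,
          Ideal.Quotient.mk (Ideal.span {π}) a = (abar : Polynomial Fq ⧸ Ideal.span {π}) →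
          ∀ δ : L, C π δ = 0 → σ δ = C a δ) := by
  classical
  set q : ℕ := Fintype.card Fq with hqdef
  have hq2 : 2 ≤ q := by
    rw [hq]
    calc 2 = 2 ^ 1 := rfl
    _ ≤ 2 ^ m := Nat.pow_le_pow_right (by omega) hm
    _ ≤ p ^ m := Nat.pow_le_pow_left hp.two_le m
  -- characteristic
  have hcharFq : CharP Fq p := by
    haveI := ringChar.charP Fq
    obtain ⟨n, hp', hcard⟩ := FiniteField.card Fq (ringChar Fq)
    have : p = ringChar Fq := by
      have hdvd : p ∣ (ringChar Fq) ^ (n : ℕ) := by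
        rw [show ((ringChar Fq)^(n:ℕ)) = q from hcard.symm, hq]
        exact dvd_pow_self p (by omega)
      exact (Nat.prime_dvd_prime_iff_eq hp hp').mp (hp.dvd_of_dvd_pow hdvd)
    rwa [this]
  haveI := hcharFq
  haveI hcharL : CharP L p := charP_of_injective_algebraMap (algebraMap Fq L).injective p
  have hqL : ((q : ℕ) : L) = 0 := by
    rw [hq]
    push_cast
    rw [show ((p : L)) = 0 from CharP.cast_eq_zero L p]
    exact zero_pow (by omega)
  set d : ℕ := π.natDegree with hddef
  have hπ0 : π ≠ 0 := hπmonic.ne_zero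
  have hd : 0 < d := hπirr.natDegree_pos
  -- iterates of C X are given by the polynomials QcAux
  have hCXpow : ∀ (i : ℕ) (x : L), ((C Polynomial.X) ^ i) x = (QcAux q t i).eval x := by
    intro i
    induction i with
    | zero => intro x; simp [QcAux]
    | succ i ih =>
      intro x
      rw [pow_succ', Module.End.mul_apply, hC, ih]
      show _ = ((QcAux q t i) ^ q + Polynomial.C t * QcAux q t i).eval x
      simp [add_comm]
  -- evaluation formula for C f
  have heval : ∀ (f : Polynomial Fq) (x : L),
      C f x = (∑ i ∈ Finset.range (f.natDegree + 1),
        Polynomial.C (algebraMap Fq L (f.coeff i)) * QcAux q t i).eval x := by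
    intro f x
    have h1 : C f = Polynomial.aeval (C Polynomial.X) f := by
      rw [Polynomial.aeval_algHom_apply, Polynomial.aeval_X_left_apply]
    rw [h1, Polynomial.aeval_eq_sum_range]
    rw [LinearMap.sum_apply]
    rw [Polynomial.eval_finset_sum]
    refine Finset.sum_congr rfl fun i _ => ?_
    rw [LinearMap.smul_apply, hCXpow, Polynomial.eval_mul, Polynomial.eval_C,
      Algebra.smul_def]
  have hQ := QcAux_monic_natDegree hq2 t
  set P : Polynomial L := ∑ i ∈ Finset.range (π.natDegree + 1),
      Polynomial.C (algebraMap Fq L (π.coeff i)) * QcAux q t i with hPdef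
  have hevalπ : ∀ x : L, C π x = P.eval x := heval π
  have hsplitP : P = (∑ i ∈ Finset.range π.natDegree,
      Polynomial.C (algebraMap Fq L (π.coeff i)) * QcAux q t i) + QcAux q t π.natDegree := by
    rw [hPdef, Finset.sum_range_succ, hπmonic.coeff_natDegree, map_one, Polynomial.C_1, one_mul]
  have hSdeg : (∑ i ∈ Finset.range π.natDegree,
      Polynomial.C (algebraMap Fq L (π.coeff i)) * QcAux q t i).natDegree
      < (QcAux q t π.natDegree).natDegree := by
    rw [(hQ π.natDegree).2]
    refine lt_of_le_of_lt (Polynomial.natDegree_sum_le_of_forall_le _ _ fun i hi => ?_)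
      (Nat.pow_lt_pow_right (by omega) (Nat.sub_lt hd one_pos))
    refine le_trans (natDegree_C_mul_le _ _) ?_
    rw [(hQ i).2]
    exact Nat.pow_le_pow_right (by omega) (by
      have := Finset.mem_range.mp hi; omega)
  have hPmonic : P.Monic := by
    rw [hsplitP]
    exact ((hQ π.natDegree).1).add_of_right (degree_lt_degree hSdeg)
  have hPnatDeg : P.natDegree = q ^ π.natDegree := by
    rw [hsplitP, natDegree_add_eq_right_of_natDegree_lt hSdeg, (hQ π.natDegree).2]
  have hP0 : P ≠ 0 := hPmonic.ne_zero
  -- derivative of P is the nonzero constant (aeval t π)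
  have hPderiv : P.derivative = Polynomial.C (Polynomial.aeval t π) := by
    rw [hPdef, derivative_sum]
    have hterm : ∀ i ∈ Finset.range (π.natDegree + 1),
        derivative (Polynomial.C (algebraMap Fq L (π.coeff i)) * QcAux q t i)
          = Polynomial.C (algebraMap Fq L (π.coeff i) * t ^ i) := by
      intro i _
      rw [derivative_C_mul, QcAux_derivative hqL, ← Polynomial.C_mul]
    rw [Finset.sum_congr rfl hterm, ← map_sum Polynomial.C]
    congr 1
    rw [Polynomial.aeval_eq_sum_range]
    exact Finset.sum_congr rfl fun i _ => (Algebra.smul_def _ _).symm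
  have hc0 : Polynomial.aeval t π ≠ 0 := fun h0 => hπ0 (transcendental_iff.mp ht π h0)
  have hPsep : P.Separable := by
    rw [Polynomial.Separable, hPderiv]
    refine ⟨0, Polynomial.C (Polynomial.aeval t π)⁻¹, ?_⟩
    rw [zero_mul, zero_add, ← Polynomial.C_mul, inv_mul_cancel₀ hc0, Polynomial.C_1]
  have hsplits : P.Splits := IsSepClosed.splits_of_separable P hPsep
  have hcard_roots : Multiset.card P.roots = q ^ π.natDegree := by
    rw [(Polynomial.splits_iff_card_roots).mp hsplits, hPnatDeg]
  have hnodup : P.roots.Nodup := Polynomial.nodup_roots hPsep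
  have hKset : {δ : L | C π δ = 0} = ↑P.roots.toFinset := by
    ext δ
    simp only [Set.mem_setOf_eq, Finset.coe_sort_coe, Finset.mem_coe,
      Multiset.mem_toFinset, Polynomial.mem_roots hP0, Polynomial.IsRoot.def, hevalπ δ]
  have hKcard : Nat.card {δ : L // C π δ = 0} = q ^ π.natDegree := by
    have h1 : Nat.card {δ : L // C π δ = 0} = Set.ncard {δ : L | C π δ = 0} := rfl
    rw [h1, hKset, Set.ncard_coe_finset, Multiset.toFinset_card_of_nodup hnodup, hcard_roots]
  have hKn : Set.ncard {δ : L | C π δ = 0} = q ^ π.natDegree := hKcard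
  -- part (b1)
  have hb1 : ∀ a b : Polynomial Fq,
      Ideal.Quotient.mk (Ideal.span {π}) a = Ideal.Quotient.mk (Ideal.span {π}) b →
      ∀ δ : L, C π δ = 0 → C a δ = C b δ := by
    intro a b hab δ hδ
    obtain ⟨c, hc⟩ := Ideal.mem_span_singleton'.mp (Ideal.Quotient.eq.mp hab)
    have h2 : C (a - b) δ = 0 := by
      rw [← hc, map_mul, Module.End.mul_apply, hδ, map_zero]
    rw [map_sub, LinearMap.sub_apply] at h2
    exact sub_eq_zero.mp h2
  -- part (b2)
  have hb2 : ∀ (a : Polynomial Fq) (δ : L), C π δ = 0 → C π (C a δ) = 0 := by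
    intro a δ hδ
    rw [← Module.End.mul_apply, ← map_mul, mul_comm, map_mul, Module.End.mul_apply, hδ, map_zero]
  -- a nonzero torsion point exists
  have hKfin : {δ : L | C π δ = 0}.Finite := by
    rw [hKset]; exact (P.roots.toFinset : Finset L).finite_toSet
  have hδ₀ex : ∃ δ₀ : L, C π δ₀ = 0 ∧ δ₀ ≠ 0 := by
    have h2 : 1 < Set.ncard {δ : L | C π δ = 0} := by
      rw [hKn]
      calc 1 < q := hq2
        _ = q ^ 1 := (pow_one q).symm
        _ ≤ q ^ π.natDegree := Nat.pow_le_pow_right (by omega) hd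
    obtain ⟨x, y, hx, hy, hxy⟩ := (Set.one_lt_ncard_iff hKfin).mp h2
    by_cases hx0 : x = 0
    · exact ⟨y, hy, fun h => hxy (by rw [hx0, ← h])⟩
    · exact ⟨x, hx, hx0⟩
  obtain ⟨δ₀, hδ₀π, hδ₀0⟩ := hδ₀ex
  -- the annihilator ideal of δ₀ is (π)
  have hmax : (Ideal.span ({π} : Set (Polynomial Fq))).IsMaximal :=
    PrincipalIdealRing.isMaximal_of_irreducible hπirr
  let I : Ideal (Polynomial Fq) :=
    { carrier := {a : Polynomial Fq | C a δ₀ = 0}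
      add_mem' := fun {x y} hx hy => by
        simp only [Set.mem_setOf_eq] at *
        rw [map_add, LinearMap.add_apply, hx, hy, add_zero]
      zero_mem' := by
        simp only [Set.mem_setOf_eq, map_zero]
        rfl
      smul_mem' := fun r x hx => by
        simp only [smul_eq_mul, Set.mem_setOf_eq] at *
        rw [map_mul, Module.End.mul_apply, hx, map_zero] }
  have hImem : ∀ a : Polynomial Fq, a ∈ I ↔ C a δ₀ = 0 := fun a => Iff.rfl
  have hspanI : Ideal.span ({π} : Set (Polynomial Fq)) = I := by
    refine hmax.eq_of_le ?_ ?_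
    · intro hT
      have h1 : (1 : Polynomial Fq) ∈ I := hT ▸ Submodule.mem_top
      rw [hImem, map_one] at h1
      exact hδ₀0 h1
    · rw [Ideal.span_le, Set.singleton_subset_iff]
      exact (hImem π).mpr hδ₀π
  -- cardinality of the quotient
  have hquotcard : Nat.card (Polynomial Fq ⧸ Ideal.span ({π} : Set (Polynomial Fq)))
      = q ^ π.natDegree := by
    have b := (AdjoinRoot.powerBasis' hπmonic).basis
    calc Nat.card (Polynomial Fq ⧸ Ideal.span ({π} : Set (Polynomial Fq)))
        = Nat.card (Fin π.natDegree → Fq) := Nat.card_congr b.equivFun.toEquiv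
      _ = q ^ π.natDegree := by
          rw [Nat.card_eq_fintype_card, Fintype.card_fun, Fintype.card_fin]
  -- generation: the orbit of δ₀ is all of C[π]
  let rep : (Polynomial Fq ⧸ Ideal.span ({π} : Set (Polynomial Fq))) → Polynomial Fq :=
    Function.surjInv Ideal.Quotient.mk_surjective
  have hrep : ∀ x, Ideal.Quotient.mk (Ideal.span {π}) (rep x) = x :=
    fun x => Function.surjInv_eq Ideal.Quotient.mk_surjective x
  let f : (Polynomial Fq ⧸ Ideal.span ({π} : Set (Polynomial Fq))) → L :=
    fun x => C (rep x) δ₀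
  have hfinj : Function.Injective f := by
    intro x y hxy
    have h3 : C (rep x - rep y) δ₀ = 0 := by
      rw [map_sub, LinearMap.sub_apply]
      show f x - f y = 0
      rw [hxy, sub_self]
    have hmem : rep x - rep y ∈ Ideal.span ({π} : Set (Polynomial Fq)) := by
      rw [hspanI]; exact h3
    calc x = Ideal.Quotient.mk _ (rep x) := (hrep x).symm
      _ = Ideal.Quotient.mk _ (rep y) := Ideal.Quotient.eq.mpr hmem
      _ = y := hrep y
  have hrange : Set.range f = {δ : L | C π δ = 0} := by
    apply Set.eq_of_subset_of_ncard_le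
    · rintro _ ⟨x, rfl⟩
      exact hb2 (rep x) δ₀ hδ₀π
    · rw [hKn]
      exact (calc q ^ π.natDegree
          = Nat.card (Polynomial Fq ⧸ Ideal.span ({π} : Set (Polynomial Fq))) := hquotcard.symm
        _ = Nat.card (Set.range f) := (Nat.card_range_of_injective hfinj).symm
        _ = (Set.range f).ncard := rfl).le
    · exact hKfin
  have hgen : ∀ δ : L, C π δ = 0 → ∃ a : Polynomial Fq, C a δ₀ = δ := by
    intro δ hδ
    have : δ ∈ Set.range f := hrange.symm ▸ hδ
    obtain ⟨x, hx⟩ := this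
    exact ⟨rep x, hx⟩
  refine ⟨hKcard, hb1, hb2, ⟨δ₀, hδ₀π, hδ₀0, hgen⟩, ?_⟩
  -- part (c)
  intro σ hσt
  have hσcomm : ∀ (g : Polynomial Fq) (x : L), σ (C g x) = C g (σ x) := by
    intro g
    induction g using Polynomial.induction_on with
    | C a =>
      intro x
      have h1 : C (Polynomial.C a) = algebraMap Fq (Module.End Fq L) a := by
        rw [show (Polynomial.C a : Polynomial Fq) = algebraMap Fq (Polynomial Fq) a from rfl]
        exact C.commutes a
      rw [h1, Module.algebraMap_end_apply, Module.algebraMap_end_apply, map_smul]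
    | add f g hf hg =>
      intro x
      rw [map_add, LinearMap.add_apply, map_add, hf, hg, LinearMap.add_apply]
    | monomial n a ih =>
      intro x
      have hX : ∀ y : L, σ (C Polynomial.X y) = C Polynomial.X (σ y) := by
        intro y
        rw [hC, hC, map_add, map_mul, hσt, map_pow]
      have hsplit : Polynomial.C a * Polynomial.X ^ (n + 1)
          = (Polynomial.C a * Polynomial.X ^ n) * Polynomial.X := by ring
      rw [hsplit, map_mul, Module.End.mul_apply, Module.End.mul_apply, ih, hX]
  have hσδ₀ : C π (σ δ₀) = 0 := by rw [← hσcomm, hδ₀π, map_zero]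
  obtain ⟨a, ha⟩ := hgen (σ δ₀) hσδ₀
  have hσδ₀ne : σ δ₀ ≠ 0 := fun h => hδ₀0 (by simpa using congrArg σ.symm h)
  have hanot : a ∉ Ideal.span ({π} : Set (Polynomial Fq)) := by
    intro hmem
    rw [hspanI] at hmem
    exact hσδ₀ne (ha ▸ hmem)
  haveI := hmax
  letI : Field (Polynomial Fq ⧸ Ideal.span ({π} : Set (Polynomial Fq))) :=
    Ideal.Quotient.field _
  have hmkne : Ideal.Quotient.mk (Ideal.span {π}) a ≠ 0 :=
    fun h => hanot (Ideal.Quotient.eq_zero_iff_mem.mp h)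
  have hunit : IsUnit (Ideal.Quotient.mk (Ideal.span {π}) a) := isUnit_iff_ne_zero.mpr hmkne
  have hkey : ∀ b : Polynomial Fq,
      Ideal.Quotient.mk (Ideal.span {π}) b = Ideal.Quotient.mk (Ideal.span {π}) a →
      ∀ δ : L, C π δ = 0 → σ δ = C b δ := by
    intro b hb δ hδ
    obtain ⟨e, he⟩ := hgen δ hδ
    have h1 : σ δ = C a δ := by
      calc σ δ = σ (C e δ₀) := by rw [he]
        _ = C e (σ δ₀) := hσcomm e δ₀
        _ = C e (C a δ₀) := by rw [ha]
        _ = C (e * a) δ₀ := by rw [map_mul, Module.End.mul_apply]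
        _ = C (a * e) δ₀ := by rw [mul_comm]
        _ = C a (C e δ₀) := by rw [map_mul, Module.End.mul_apply]
        _ = C a δ := by rw [he]
    exact h1.trans (hb1 a b hb.symm δ hδ)
  refine ⟨hunit.unit, ?_, ?_⟩
  · intro b hb δ hδ
    refine hkey b ?_ δ hδ
    rw [hb, IsUnit.unit_spec]
  · intro u hu
    obtain ⟨b, hb⟩ := Ideal.Quotient.mk_surjective (u : Polynomial Fq ⧸ Ideal.span {π})
    have h2 : σ δ₀ = C b δ₀ := hu b hb δ₀ hδ₀π
    have h3 : C (b - a) δ₀ = 0 := by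
      rw [map_sub, LinearMap.sub_apply, ← h2, ha, sub_self]
    have hmem : b - a ∈ Ideal.span ({π} : Set (Polynomial Fq)) := by
      rw [hspanI]; exact h3
    refine Units.ext ?_
    rw [← hb, IsUnit.unit_spec]
    exact Ideal.Quotient.eq.mpr hmem
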